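/- Let a, b, c, d ∈ ℝ² be points with strictly increasing x-coordinates (the x-coordinate of a is less than that of b, which is less than that of c, which is less than that of d). If the triples (a, b, c) and (a, c, d) are both positively oriented, then the triple (a, b, d) is positively oriented; and if (a, b, c) and (a, c, d) are both negatively oriented, then (a, b, d) is negatively oriented. (Signotope axiom, first form.) -/
import Mathlib

/-- Orientation determinant of three points in the plane:
`det [[1,1,1],[pₓ,qₓ,rₓ],[p_y,q_y,r_y]]`.
The triple `(p,q,r)` is positively oriented iff `det3 p q r > 0`,
and negatively oriented iff `det3 p q r < 0`. -/
noncomputable def det3 (p q r : ℝ × ℝ) : ℝ :=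
  Matrix.det !![(1:ℝ), 1, 1; p.1, q.1, r.1; p.2, q.2, r.2]

/-- A set of points in the plane is in general position if no three
distinct points of it are collinear. -/
def InGenPos (S : Set (ℝ × ℝ)) : Prop :=
  ∀ p ∈ S, ∀ q ∈ S, ∀ r ∈ S, p ≠ q → p ≠ r → q ≠ r →
    ¬ Collinear ℝ ({p, q, r} : Set (ℝ × ℝ))

/-- `P` is a `k`-gon of `S`: a `k`-element subset of `S` in convex position,
i.e. every point of `P` is an extreme point of the convex hull of `P`. -/
def IsGon (k : ℕ) (S P : Set (ℝ × ℝ)) : Prop :=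
  P ⊆ S ∧ P.Finite ∧ P.ncard = k ∧
    ∀ p ∈ P, p ∈ Set.extremePoints ℝ (convexHull ℝ P)

/-- `P` is a `k`-hole of `S`: a `k`-gon of `S` whose convex hull contains
no point of `S` other than the `k` points of `P`. -/
def IsHole (k : ℕ) (S P : Set (ℝ × ℝ)) : Prop :=
  IsGon k S P ∧ ∀ q ∈ S, q ∈ convexHull ℝ P → q ∈ P

lemma det3_eq (p q r : ℝ × ℝ) :
    det3 p q r = (q.1 - p.1) * (r.2 - p.2) - (r.1 - p.1) * (q.2 - p.2) := by
  simp [det3, Matrix.det_fin_three]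
  ring

/-- Signotope axiom, first form. -/
theorem signotope_axiom_first_form (a b c d : ℝ × ℝ)
    (hab : a.1 < b.1) (hbc : b.1 < c.1) (hcd : c.1 < d.1) :
    (det3 a b c > 0 → det3 a c d > 0 → det3 a b d > 0) ∧
    (det3 a b c < 0 → det3 a c d < 0 → det3 a b d < 0) := by
  have key : (c.1 - a.1) * det3 a b d
      = (d.1 - a.1) * det3 a b c + (b.1 - a.1) * det3 a c d := by
    simp only [det3_eq]; ring
  have hca : 0 < c.1 - a.1 := by linarith
  have hda : 0 < d.1 - a.1 := by linarith
  have hba : 0 < b.1 - a.1 := by linarith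
  constructor
  · intro h1 h2
    nlinarith [mul_pos hda h1, mul_pos hba h2]
  · intro h1 h2
    nlinarith [mul_pos hda (neg_pos.2 h1), mul_pos hba (neg_pos.2 h2)]
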